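/- Let μ be a finite Borel measure on S^{n-1} not concentrated in any closed hemisphere, and let (h_k) be a sequence of support functions of convex bodies containing 0 in their interiors, with min h_k = 1 for all k. Then there exist a subsequence (h_{k'}), constants ε₀, δ₀ ∈ (0,1), and an index k₀ such that for all k' ≥ k₀, (1/μ(S^{n-1})) ∫_{S^{n-1}} log h_{k'} dμ ≥ log((δ₀/2)·(max h_{k'})^{ε₀}). -/

import Mathlib

open Metric MeasureTheory RealInnerProductSpace

/-- The support function `h_K(x) = max{ξ·x : ξ ∈ K}`. -/
noncomputable def suppFn {n : ℕ} (K : Set (EuclideanSpace ℝ (Fin n)))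
    (x : EuclideanSpace ℝ (Fin n)) : ℝ :=
  sSup ((fun ξ => ⟪ξ, x⟫) '' K)

lemma suppFn_ge {n : ℕ} {K : Set (EuclideanSpace ℝ (Fin n))} (hK : IsCompact K)
    {ξ : EuclideanSpace ℝ (Fin n)} (hξ : ξ ∈ K) (x : EuclideanSpace ℝ (Fin n)) :
    ⟪ξ, x⟫ ≤ suppFn K x :=
  le_csSup ((hK.image (continuous_id.inner continuous_const)).bddAbove) ⟨ξ, hξ, rfl⟩

lemma suppFn_continuous {n : ℕ} {K : Set (EuclideanSpace ℝ (Fin n))} (hK : IsCompact K)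
    (hne : K.Nonempty) : Continuous (suppFn K) := by
  obtain ⟨R, hR⟩ := hK.isBounded.exists_norm_le
  have hR0 : 0 ≤ R := (norm_nonneg _).trans (hR _ hne.choose_spec)
  have key : ∀ x y : EuclideanSpace ℝ (Fin n), suppFn K x ≤ suppFn K y + R * ‖x - y‖ := by
    intro x y
    apply csSup_le (hne.image _)
    rintro a ⟨ξ, hξ, rfl⟩
    have h1 : ⟪ξ, x⟫ = ⟪ξ, y⟫ + ⟪ξ, x - y⟫ := by rw [inner_sub_right]; ring
    have h2 : ⟪ξ, x - y⟫ ≤ R * ‖x - y‖ :=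
      (real_inner_le_norm ξ (x - y)).trans
        (mul_le_mul_of_nonneg_right (hR ξ hξ) (norm_nonneg _))
    have h3 : ⟪ξ, y⟫ ≤ suppFn K y := suppFn_ge hK hξ y
    linarith
  refine (LipschitzWith.of_dist_le_mul (K := ⟨R, hR0⟩) ?_).continuous
  intro x y
  rw [Real.dist_eq, dist_eq_norm]
  show |suppFn K x - suppFn K y| ≤ R * ‖x - y‖
  rw [abs_sub_le_iff]
  constructor
  · linarith [key x y]
  · have := key y x
    rw [norm_sub_rev y x] at this
    linarith


/-- Entropy-type estimate (Lemma 5.1): if `μ` is a finite Borel measure on `S^{n-1}` not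
concentrated in any closed hemisphere and `(h_k)` are support functions of convex bodies
containing `0` in their interiors with `min h_k = 1`, then along a subsequence and for
suitable `ε₀, δ₀ ∈ (0,1)` and large indices,
`(1/|μ|)∫ log h_{k'} dμ ≥ log((δ₀/2)(max h_{k'})^{ε₀})`. -/
theorem entropy_type_estimate (n : ℕ) (hn : 0 < n)
    (μ : Measure (sphere (0 : EuclideanSpace ℝ (Fin n)) 1)) [IsFiniteMeasure μ]
    (hμ : ∀ x₀ ∈ sphere (0 : EuclideanSpace ℝ (Fin n)) 1,
      0 < μ {x : sphere (0 : EuclideanSpace ℝ (Fin n)) 1 |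
        0 < ⟪(x : EuclideanSpace ℝ (Fin n)), x₀⟫})
    (h : ℕ → EuclideanSpace ℝ (Fin n) → ℝ)
    (hbody : ∀ k, ∃ K : Set (EuclideanSpace ℝ (Fin n)), Convex ℝ K ∧ IsCompact K ∧
      (0 : EuclideanSpace ℝ (Fin n)) ∈ interior K ∧ ∀ x, h k x = suppFn K x)
    (hmin : ∀ k, IsLeast (h k '' sphere (0 : EuclideanSpace ℝ (Fin n)) 1) 1) :
    ∃ φ : ℕ → ℕ, StrictMono φ ∧
      ∃ ε₀ δ₀ : ℝ, ε₀ ∈ Set.Ioo (0 : ℝ) 1 ∧ δ₀ ∈ Set.Ioo (0 : ℝ) 1 ∧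
        ∃ k₀ : ℕ, ∀ j ≥ k₀,
          Real.log ((δ₀ / 2) *
              sSup (h (φ j) '' sphere (0 : EuclideanSpace ℝ (Fin n)) 1) ^ ε₀) ≤
            (μ Set.univ).toReal⁻¹ *
              ∫ x : sphere (0 : EuclideanSpace ℝ (Fin n)) 1,
                Real.log (h (φ j) (x : EuclideanSpace ℝ (Fin n))) ∂μ := by
  classical
  choose K hKconv hKcomp hK0 hKeq using hbody
  have hScomp : IsCompact (sphere (0 : EuclideanSpace ℝ (Fin n)) 1) := isCompact_sphere _ _
  have hSne : (sphere (0 : EuclideanSpace ℝ (Fin n)) 1).Nonempty := by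
    refine ⟨EuclideanSpace.single ⟨0, hn⟩ (1:ℝ), ?_⟩
    simp [mem_sphere_zero_iff_norm, EuclideanSpace.norm_single]
  have hKne : ∀ k, (K k).Nonempty := fun k => ⟨0, interior_subset (hK0 k)⟩
  have hcont : ∀ k, Continuous (h k) := by
    intro k
    have heq : h k = suppFn (K k) := funext (hKeq k)
    rw [heq]
    exact suppFn_continuous (hKcomp k) (hKne k)
  set M : ℕ → ℝ := fun k => sSup (h k '' sphere (0 : EuclideanSpace ℝ (Fin n)) 1) with hMdef
  have hbdd : ∀ k, BddAbove (h k '' sphere (0 : EuclideanSpace ℝ (Fin n)) 1) :=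
    fun k => (hScomp.image (hcont k)).bddAbove
  have hone : ∀ k, ∀ x ∈ sphere (0 : EuclideanSpace ℝ (Fin n)) 1, 1 ≤ h k x :=
    fun k x hx => (hmin k).2 ⟨x, hx, rfl⟩
  have hleM : ∀ k, ∀ x ∈ sphere (0 : EuclideanSpace ℝ (Fin n)) 1, h k x ≤ M k :=
    fun k x hx => le_csSup (hbdd k) ⟨x, hx, rfl⟩
  have hM1 : ∀ k, 1 ≤ M k := fun k => le_csSup (hbdd k) (hmin k).1
  have key : ∀ k, ∃ u : EuclideanSpace ℝ (Fin n), ‖u‖ = 1 ∧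
      ∀ x, 0 ≤ ⟪u, x⟫ → M k * ⟪u, x⟫ ≤ h k x := by
    intro k
    obtain ⟨xk, hxkS, hxkmax⟩ := hScomp.exists_isMaxOn hSne (hcont k).continuousOn
    have hMk : M k = h k xk :=
      IsGreatest.csSup_eq ⟨⟨xk, hxkS, rfl⟩, by rintro a ⟨y, hy, rfl⟩; exact hxkmax hy⟩
    have hcontinner : Continuous (fun ξ : EuclideanSpace ℝ (Fin n) => ⟪ξ, xk⟫) :=
      continuous_id.inner continuous_const
    obtain ⟨ξ, hξK, hξmax⟩ := (hKcomp k).exists_isMaxOn (hKne k) hcontinner.continuousOn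
    have hξval : h k xk = ⟪ξ, xk⟫ := by
      rw [hKeq k]
      exact IsGreatest.csSup_eq ⟨⟨ξ, hξK, rfl⟩, by rintro a ⟨η, hη, rfl⟩; exact hξmax hη⟩
    have hxknorm : ‖xk‖ = 1 := mem_sphere_zero_iff_norm.mp hxkS
    have hξnorm : M k ≤ ‖ξ‖ := by
      have hcs := real_inner_le_norm ξ xk
      rw [hxknorm, mul_one] at hcs
      rw [hMk, hξval]; exact hcs
    have hξpos : 0 < ‖ξ‖ := lt_of_lt_of_le (by linarith [hM1 k]) hξnorm
    refine ⟨‖ξ‖⁻¹ • ξ, ?_, ?_⟩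
    · rw [norm_smul, norm_inv, norm_norm, inv_mul_cancel₀ hξpos.ne']
    · intro x hx
      have h1 : ⟪‖ξ‖⁻¹ • ξ, x⟫ = ‖ξ‖⁻¹ * ⟪ξ, x⟫ := real_inner_smul_left ξ x _
      have h2 : ⟪ξ, x⟫ = ‖ξ‖ * ⟪‖ξ‖⁻¹ • ξ, x⟫ := by
        rw [h1]; field_simp
      calc M k * ⟪‖ξ‖⁻¹ • ξ, x⟫ ≤ ‖ξ‖ * ⟪‖ξ‖⁻¹ • ξ, x⟫ :=
            mul_le_mul_of_nonneg_right hξnorm hx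
        _ = ⟪ξ, x⟫ := h2.symm
        _ ≤ suppFn (K k) x := suppFn_ge (hKcomp k) hξK x
        _ = h k x := (hKeq k x).symm
  choose u hunorm hukey using key
  obtain ⟨x₀, hx₀S, φ, hφ, hφtend⟩ := hScomp.tendsto_subseq
    (fun k => mem_sphere_zero_iff_norm.mpr (hunorm k))
  refine ⟨φ, hφ, ?_⟩
  -- find δ with positive measure
  have hδex : ∃ δ : ℝ, 0 < δ ∧ δ ≤ 1/2 ∧
      0 < μ {x : sphere (0 : EuclideanSpace ℝ (Fin n)) 1 |
        δ ≤ ⟪(x : EuclideanSpace ℝ (Fin n)), x₀⟫} := by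
    by_contra hcon
    push_neg at hcon
    have hall : ∀ m : ℕ, μ {x : sphere (0 : EuclideanSpace ℝ (Fin n)) 1 |
        (1:ℝ)/(m+2) ≤ ⟪(x : EuclideanSpace ℝ (Fin n)), x₀⟫} = 0 := by
      intro m
      have h1 : (0:ℝ) < 1/(m+2) := by positivity
      have h2 : (1:ℝ)/(m+2) ≤ 1/2 := by
        rw [div_le_div_iff₀ (by positivity) (by norm_num)]
        push_cast; linarith [Nat.cast_nonneg (α := ℝ) m]
      exact le_antisymm (by simpa using hcon _ h1 h2) (zero_le)
    have hcover : {x : sphere (0 : EuclideanSpace ℝ (Fin n)) 1 |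
        0 < ⟪(x : EuclideanSpace ℝ (Fin n)), x₀⟫} ⊆
        ⋃ m : ℕ, {x : sphere (0 : EuclideanSpace ℝ (Fin n)) 1 |
          (1:ℝ)/(m+2) ≤ ⟪(x : EuclideanSpace ℝ (Fin n)), x₀⟫} := by
      intro x hx
      obtain ⟨m, hm⟩ := exists_nat_one_div_lt
        (show (0:ℝ) < ⟪(x : EuclideanSpace ℝ (Fin n)), x₀⟫ from hx)
      refine Set.mem_iUnion.mpr ⟨m, ?_⟩
      have hmono : (1:ℝ)/(m+2) ≤ 1/(m+1) := by
        rw [div_le_div_iff₀ (by positivity) (by positivity)]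
        push_cast; linarith
      exact le_of_lt (lt_of_le_of_lt hmono hm)
    have := measure_mono_null hcover (measure_iUnion_null hall)
    exact absurd this (hμ x₀ hx₀S).ne'
  obtain ⟨δ, hδ0, hδhalf, hAμ⟩ := hδex
  set A : Set (sphere (0 : EuclideanSpace ℝ (Fin n)) 1) :=
    {x : sphere (0 : EuclideanSpace ℝ (Fin n)) 1 |
      δ ≤ ⟪(x : EuclideanSpace ℝ (Fin n)), x₀⟫} with hAdef
  have hAmeas : MeasurableSet A :=
    (continuous_subtype_val.inner continuous_const).measurable measurableSet_Ici
  set T : ℝ := (μ Set.univ).toReal with hTdef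
  set c : ℝ := (μ A).toReal with hcdef
  have hT0 : 0 < T := ENNReal.toReal_pos
    (fun hc0 => (hAμ.trans_le (measure_mono (Set.subset_univ A))).ne' hc0) (measure_ne_top μ _)
  have hc0 : 0 < c := ENNReal.toReal_pos hAμ.ne' (measure_ne_top μ _)
  have hcT : c ≤ T := ENNReal.toReal_le_toReal (measure_ne_top μ _) (measure_ne_top μ _)
    |>.mpr (measure_mono (Set.subset_univ A))
  set ε₀ : ℝ := min (1/2) (c / T) with hεdef
  have hε0 : 0 < ε₀ := lt_min (by norm_num) (div_pos hc0 hT0)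
  have hε1 : ε₀ < 1 := lt_of_le_of_lt (min_le_left _ _) (by norm_num)
  set δ₀ : ℝ := (δ/2) ^ ε₀ with hδ₀def
  have hδ₀0 : 0 < δ₀ := Real.rpow_pos_of_pos (by linarith) _
  have hδ₀1 : δ₀ < 1 := Real.rpow_lt_one (by linarith) (by linarith) hε0
  refine ⟨ε₀, δ₀, ⟨hε0, hε1⟩, ⟨hδ₀0, hδ₀1⟩, ?_⟩
  -- index from which u∘φ is δ/2-close to x₀
  have htend := Metric.tendsto_atTop.mp hφtend (δ/2) (by linarith)
  obtain ⟨k₀, hk₀⟩ := htend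
  refine ⟨k₀, fun j hj => ?_⟩
  set kk := φ j with hkkdef
  have hclose : ‖u kk - x₀‖ < δ/2 := by
    have := hk₀ j hj
    rwa [dist_eq_norm] at this
  -- lower bound for h kk on A
  have hAbound : ∀ x ∈ A, max 1 (δ/2 * M kk) ≤ h kk (x : EuclideanSpace ℝ (Fin n)) := by
    intro x hx
    have hxS : (x : EuclideanSpace ℝ (Fin n)) ∈ sphere (0 : EuclideanSpace ℝ (Fin n)) 1 := x.2
    have hxnorm : ‖(x : EuclideanSpace ℝ (Fin n))‖ = 1 := mem_sphere_zero_iff_norm.mp hxS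
    refine max_le (hone kk _ hxS) ?_
    have hip : δ/2 ≤ ⟪u kk, (x : EuclideanSpace ℝ (Fin n))⟫ := by
      have hx₀x : δ ≤ ⟪x₀, (x : EuclideanSpace ℝ (Fin n))⟫ := by
        rw [real_inner_comm]; exact hx
      have hdiff : |⟪u kk - x₀, (x : EuclideanSpace ℝ (Fin n))⟫| ≤ δ/2 := by
        refine (abs_real_inner_le_norm _ _).trans ?_
        rw [hxnorm, mul_one]; linarith
      have hsplit : ⟪u kk, (x : EuclideanSpace ℝ (Fin n))⟫ =
          ⟪x₀, (x : EuclideanSpace ℝ (Fin n))⟫ + ⟪u kk - x₀, (x : EuclideanSpace ℝ (Fin n))⟫ := by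
        rw [inner_sub_left]; ring
      have := abs_le.mp hdiff
      linarith [hsplit, this.1]
    have := hukey kk (x : EuclideanSpace ℝ (Fin n)) (by linarith)
    nlinarith [hM1 kk]
  -- integrability
  set f : sphere (0 : EuclideanSpace ℝ (Fin n)) 1 → ℝ :=
    fun x => Real.log (h kk (x : EuclideanSpace ℝ (Fin n))) with hfdef
  have hfc : Continuous f := by
    have hin : Continuous (fun x : sphere (0 : EuclideanSpace ℝ (Fin n)) 1 =>
        h kk (x : EuclideanSpace ℝ (Fin n))) := (hcont kk).comp continuous_subtype_val
    exact hin.log fun x => by have := hone kk _ x.2; linarith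
  have hfint : Integrable f μ := by
    refine Integrable.mono' (integrable_const (Real.log (M kk))) hfc.aestronglyMeasurable
      (ae_of_all _ fun x => ?_)
    rw [Real.norm_eq_abs, abs_of_nonneg (Real.log_nonneg (hone kk _ x.2))]
    exact Real.log_le_log (by linarith [hone kk _ x.2]) (hleM kk _ x.2)
  have hf0 : 0 ≤ᵐ[μ] f := ae_of_all _ fun x => Real.log_nonneg (hone kk _ x.2)
  set L : ℝ := Real.log (max 1 (δ/2 * M kk)) with hLdef
  have hL0 : 0 ≤ L := Real.log_nonneg (le_max_left _ _)
  have step1 : L * c ≤ ∫ x in A, f x ∂μ := by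
    refine setIntegral_ge_of_const_le_real hAmeas (measure_ne_top μ A) (fun x hx => ?_)
      hfint.integrableOn
    exact Real.log_le_log (lt_of_lt_of_le one_pos (le_max_left _ _)) (hAbound x hx)
  have step2 : ∫ x in A, f x ∂μ ≤ ∫ x, f x ∂μ := setIntegral_le_integral hfint hf0
  have hM0 : (0:ℝ) < M kk := lt_of_lt_of_le one_pos (hM1 kk)
  -- numeric inequality
  have hnum : Real.log ((δ₀ / 2) * M kk ^ ε₀) ≤ ε₀ * L := by
    have e1 : (δ₀ / 2) * M kk ^ ε₀ ≤ (max 1 (δ/2 * M kk)) ^ ε₀ := by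
      have r1 : (δ₀ / 2) * M kk ^ ε₀ ≤ δ₀ * M kk ^ ε₀ :=
        mul_le_mul_of_nonneg_right (by linarith) (Real.rpow_nonneg hM0.le _)
      have r2 : δ₀ * M kk ^ ε₀ = (δ/2 * M kk) ^ ε₀ :=
        (Real.mul_rpow (by linarith) hM0.le).symm
      have r3 : (δ/2 * M kk) ^ ε₀ ≤ (max 1 (δ/2 * M kk)) ^ ε₀ :=
        Real.rpow_le_rpow (by positivity) (le_max_right _ _) hε0.le
      linarith
    have hLHSpos : 0 < (δ₀ / 2) * M kk ^ ε₀ := by positivity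
    calc Real.log ((δ₀ / 2) * M kk ^ ε₀) ≤ Real.log ((max 1 (δ/2 * M kk)) ^ ε₀) :=
          Real.log_le_log hLHSpos e1
      _ = ε₀ * L := Real.log_rpow (lt_of_lt_of_le one_pos (le_max_left _ _)) _
  have hfinal : ε₀ * L ≤ T⁻¹ * ∫ x, f x ∂μ := by
    have s1 : ε₀ * L ≤ (c / T) * L := mul_le_mul_of_nonneg_right (min_le_right _ _) hL0
    have s2 : (c / T) * L = T⁻¹ * (L * c) := by ring
    have s3 : T⁻¹ * (L * c) ≤ T⁻¹ * ∫ x, f x ∂μ :=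
      mul_le_mul_of_nonneg_left (step1.trans step2) (inv_nonneg.mpr hT0.le)
    linarith
  exact hnum.trans hfinal
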